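/- A GML-formula φ is ML-definable (i.e., there is an ML-formula χ such that for every Kripke model M and world w, M,w ⊨ φ iff M,w ⊨ χ) if and only if the equivalence φ ↔ φ^f is true at every world of every Kripke model, where φ^f is the flattening of φ. -/

import Mathlib

/-- Formulas of graded modal logic GML: modal logic with graded modalities
`◇^{≥k}` for `k ≥ 1`. The constructor `gdia k φ` represents `◇^{≥ k+1} φ`. -/
inductive GML : Type
  | top : GML
  | var : ℕ → GML
  | and : GML → GML → GML
  | not : GML → GML
  | dia : GML → GML
  | gdia : ℕ → GML → GML

/-- A GML-formula is an ML-formula if it contains no graded modality. -/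
def GML.IsML : GML → Prop
  | .top => True
  | .var _ => True
  | .and φ ψ => φ.IsML ∧ ψ.IsML
  | .not φ => φ.IsML
  | .dia φ => φ.IsML
  | .gdia _ _ => False

/-- The flattening of a GML-formula: replace every `◇^{≥k}` by `◇`. -/
def GML.flatten : GML → GML
  | .top => .top
  | .var p => .var p
  | .and φ ψ => .and φ.flatten ψ.flatten
  | .not φ => .not φ.flatten
  | .dia φ => .dia φ.flatten
  | .gdia _ φ => .dia φ.flatten

/-- A Kripke model. -/
structure Kripke : Type 1 where
  W : Type
  nonempty : Nonempty W
  R : W → W → Prop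
  V : ℕ → Set W

/-- Truth of a GML-formula at a world: `gdia k φ` (that is, `◇^{≥ k+1} φ`) holds at `u`
iff there are at least `k+1` distinct successors of `u` satisfying `φ`. -/
def GML.sat (M : Kripke) : M.W → GML → Prop
  | _, .top => True
  | w, .var p => w ∈ M.V p
  | w, .and φ ψ => GML.sat M w φ ∧ GML.sat M w ψ
  | w, .not φ => ¬ GML.sat M w φ
  | w, .dia φ => ∃ v, M.R w v ∧ GML.sat M v φ
  | w, .gdia k φ => ∃ f : Fin (k + 1) ↪ M.W, ∀ i, M.R w (f i) ∧ GML.sat M (f i) φ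
lemma GML.flatten_isML (φ : GML) : φ.flatten.IsML := by
  induction φ <;> simp [GML.flatten, GML.IsML, *]

/-- Duplicate every world ℕ-many times. -/
def Kripke.dup (M : Kripke) : Kripke where
  W := M.W × ℕ
  nonempty := ⟨(Classical.choice M.nonempty, 0)⟩
  R := fun u v => M.R u.1 v.1
  V := fun p => {x | x.1 ∈ M.V p}

/-- Satisfaction in `dup M` depends only on the first component. -/
lemma sat_dup_indep (M : Kripke) (φ : GML) :
    ∀ u v : M.dup.W, u.1 = v.1 → (GML.sat M.dup u φ ↔ GML.sat M.dup v φ) := by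
  induction φ with
  | top => intro u v h; simp [GML.sat]
  | var p => intro u v h; simp [GML.sat, Kripke.dup, h]; show u.1 ∈ M.V p ↔ v.1 ∈ M.V p; rw [h]
  | and φ ψ ihφ ihψ =>
      intro u v h; simp only [GML.sat]; rw [ihφ u v h, ihψ u v h]
  | not φ ih => intro u v h; simp only [GML.sat]; rw [ih u v h]
  | dia φ ih =>
      intro u v h
      simp only [GML.sat]
      constructor
      · rintro ⟨x, hR, hx⟩; exact ⟨x, by simpa [Kripke.dup, h] using hR, hx⟩
      · rintro ⟨x, hR, hx⟩; exact ⟨x, by simpa [Kripke.dup, h] using hR, hx⟩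
  | gdia k φ ih =>
      intro u v h
      simp only [GML.sat]
      constructor
      · rintro ⟨f, hf⟩
        exact ⟨f, fun i => ⟨by simpa [Kripke.dup, h] using (hf i).1, (hf i).2⟩⟩
      · rintro ⟨f, hf⟩
        exact ⟨f, fun i => ⟨by simpa [Kripke.dup, h] using (hf i).1, (hf i).2⟩⟩

/-- ML-formulas are invariant between `M` and `dup M`. -/
lemma sat_dup_ml (M : Kripke) (φ : GML) (hML : φ.IsML) :
    ∀ (u : M.W) (n : ℕ), GML.sat M.dup (u, n) φ ↔ GML.sat M u φ := by
  induction φ with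
  | top => intro u n; simp [GML.sat]
  | var p => intro u n; simp [GML.sat, Kripke.dup]; exact Iff.rfl
  | and φ ψ ihφ ihψ =>
      intro u n
      simp only [GML.sat]
      rw [ihφ hML.1 u n, ihψ hML.2 u n]
  | not φ ih => intro u n; simp only [GML.sat]; rw [ih hML u n]
  | dia φ ih =>
      intro u n
      simp only [GML.sat]
      constructor
      · rintro ⟨v, hR, hv⟩
        exact ⟨v.1, hR, (ih hML v.1 v.2).mp hv⟩
      · rintro ⟨v, hR, hv⟩
        exact ⟨(v, 0), hR, (ih hML v 0).mpr hv⟩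
  | gdia k φ ih => exact absurd hML id

/-- In `dup M`, every formula is equivalent to its flattening. -/
lemma sat_dup_flatten (M : Kripke) (φ : GML) :
    ∀ u : M.dup.W, GML.sat M.dup u φ ↔ GML.sat M.dup u φ.flatten := by
  induction φ with
  | top => intro u; simp [GML.sat, GML.flatten]
  | var p => intro u; simp [GML.sat, GML.flatten]
  | and φ ψ ihφ ihψ =>
      intro u; simp only [GML.sat, GML.flatten]; rw [ihφ u, ihψ u]
  | not φ ih => intro u; simp only [GML.sat, GML.flatten]; rw [ih u]
  | dia φ ih =>
      intro u
      simp only [GML.sat, GML.flatten]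
      exact exists_congr fun v => and_congr_right fun _ => ih v
  | gdia k φ ih =>
      intro u
      simp only [GML.sat, GML.flatten]
      constructor
      · rintro ⟨f, hf⟩
        exact ⟨f 0, (hf 0).1, (ih (f 0)).mp (hf 0).2⟩
      · rintro ⟨v, hR, hv⟩
        have hφ : GML.sat M.dup v φ := (ih v).mpr hv
        refine ⟨⟨fun i => (v.1, i.val), ?_⟩, fun i => ⟨hR, ?_⟩⟩
        · intro i j h
          exact Fin.ext (congrArg Prod.snd h)
        · exact (sat_dup_indep M φ (v.1, i.val) v rfl).mpr hφ

/-- A GML-formula is ML-definable iff it is equivalent to its flattening. -/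
theorem GML_ML_definability (φ : GML) :
    (∃ χ : GML, χ.IsML ∧ ∀ (M : Kripke) (w : M.W), GML.sat M w φ ↔ GML.sat M w χ) ↔
      (∀ (M : Kripke) (w : M.W), GML.sat M w φ ↔ GML.sat M w φ.flatten) := by
  constructor
  · rintro ⟨χ, hML, hχ⟩ M w
    calc GML.sat M w φ ↔ GML.sat M w χ := hχ M w
      _ ↔ GML.sat M.dup (w, 0) χ := (sat_dup_ml M χ hML w 0).symm
      _ ↔ GML.sat M.dup (w, 0) φ := (hχ M.dup (w, 0)).symm
      _ ↔ GML.sat M.dup (w, 0) φ.flatten := sat_dup_flatten M φ (w, 0)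
      _ ↔ GML.sat M w φ.flatten := sat_dup_ml M φ.flatten φ.flatten_isML w 0
  · intro h
    exact ⟨φ.flatten, φ.flatten_isML, h⟩
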